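/- Let R be a reduced root system in ℝ^N with positive subsystem R₊ and W-invariant multiplicity function κ with κ(α) > 0. A polynomial function p : ℝ^N → ℝ is W-invariant if and only if for every coordinate index i and every x ∈ ℝ^N with ⟪α,x⟫ ≠ 0 for all α ∈ R₊, one has Σ_{α∈R₊} κ(α) α_i (p(x) − p(σ_α x))/⟪α,x⟫ = 0; equivalently, the Dunkl operators T_i (for any fixed β > 0) coincide with the partial derivatives ∂/∂x_i on p for all i. -/

import Mathlib

open scoped RealInnerProductSpace BigOperators
open MeasureTheory

noncomputable section

/-- Reflection of `x` along the vector `α`. -/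
def sigmaRefl {N : ℕ} (α x : EuclideanSpace ℝ (Fin N)) : EuclideanSpace ℝ (Fin N) :=
  x - (2 * ⟪α, x⟫ / ⟪α, α⟫) • α

namespace St5Aux

variable {N : ℕ}

local notation "E" => EuclideanSpace ℝ (Fin N)

lemma inner_sum (a x : E) : ⟪a, x⟫ = ∑ i, a i * x i := by
  simp [PiLp.inner_apply, RCLike.inner_apply, mul_comm]

lemma sigmaRefl_coord (α x : E) (j : Fin N) :
    sigmaRefl α x j = x j - (2 * ⟪α, x⟫ / ⟪α, α⟫) * α j := rfl

lemma sigmaRefl_of_inner_zero {α x : E} (h : ⟪α, x⟫ = 0) : sigmaRefl α x = x := by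
  simp [sigmaRefl, h]

lemma inner_sigmaRefl_self (α : E) (hα : α ≠ 0) (x : E) :
    ⟪α, sigmaRefl α x⟫ = -⟪α, x⟫ := by
  have hd : ⟪α, α⟫ ≠ 0 := inner_self_ne_zero.mpr hα
  simp only [sigmaRefl, inner_sub_right, real_inner_smul_right]
  rw [div_mul_cancel₀ _ hd]
  ring

lemma sigmaRefl_involutive (α : E) (hα : α ≠ 0) :
    Function.Involutive (sigmaRefl α) := by
  intro x
  have h := inner_sigmaRefl_self α hα x
  conv_lhs => rw [sigmaRefl, h]
  rw [sigmaRefl]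
  module

def sigmaLin (α : E) : E →ₗ[ℝ] E where
  toFun := sigmaRefl α
  map_add' x y := by
    simp only [sigmaRefl, inner_add_right]
    module
  map_smul' c x := by
    simp only [sigmaRefl, real_inner_smul_right, RingHom.id_apply]
    module

lemma sigmaRefl_add_smul (α x v : E) (t : ℝ) :
    sigmaRefl α (x + t • v) = sigmaRefl α x + t • sigmaRefl α v := by
  have h1 := (sigmaLin α).map_add x (t • v)
  have h2 := (sigmaLin α).map_smul t v
  simp only [sigmaLin, LinearMap.coe_mk, AddHom.coe_mk, RingHom.id_apply] at h1 h2
  rw [h1, h2]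

lemma sigmaRefl_norm (α : E) (hα : α ≠ 0) (x : E) : ‖sigmaRefl α x‖ = ‖x‖ := by
  have hd : ⟪α, α⟫ ≠ 0 := inner_self_ne_zero.mpr hα
  have h2 : ‖sigmaRefl α x‖ ^ 2 = ‖x‖ ^ 2 := by
    rw [sigmaRefl, norm_sub_sq_real, real_inner_smul_right, norm_smul,
      Real.norm_eq_abs, mul_pow, sq_abs, real_inner_comm x α]
    have hn : ‖α‖ ^ 2 = ⟪α, α⟫ := (real_inner_self_eq_norm_sq α).symm
    rw [hn]
    generalize hA : (⟪x, α⟫ : ℝ) = A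
    generalize hD : (⟪α, α⟫ : ℝ) = D at hd
    field_simp
    ring
  have := congrArg Real.sqrt h2
  rwa [Real.sqrt_sq (norm_nonneg _), Real.sqrt_sq (norm_nonneg _)] at this

/-- The reflection as a linear isometry equivalence. -/
def reflIso (α : E) (hα : α ≠ 0) : E ≃ₗᵢ[ℝ] E :=
  ⟨LinearEquiv.ofInvolutive (sigmaLin α) (sigmaRefl_involutive α hα),
    fun x => sigmaRefl_norm α hα x⟩

lemma reflIso_coe (α : E) (hα : α ≠ 0) : ⇑(reflIso α hα) = sigmaRefl α := rfl

lemma sigmaRefl_self_eq_neg (α : E) (hα : α ≠ 0) : sigmaRefl α α = -α := by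
  have hd : ⟪α, α⟫ ≠ 0 := inner_self_ne_zero.mpr hα
  rw [sigmaRefl, mul_div_assoc, div_self hd, mul_one]
  module

lemma sigmaRefl_neg (α : E) : sigmaRefl (-α) = sigmaRefl α := by
  funext x
  simp [sigmaRefl, inner_neg_left, inner_neg_right, neg_div, smul_neg, neg_smul,
    neg_neg, div_neg]


end St5Aux

/-- A reduced root system in `ℝ^N`, together with a choice of positivity direction `m`. -/
structure DunklRootSystem (N : ℕ) where
  R : Finset (EuclideanSpace ℝ (Fin N))
  nonzero : ∀ α ∈ R, α ≠ 0
  invariant : ∀ α ∈ R, ∀ ξ ∈ R, sigmaRefl α ξ ∈ R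
  reduced : ∀ α ∈ R, ∀ ξ ∈ R, ∀ a : ℝ, ξ = a • α → a = 1 ∨ a = -1
  m : EuclideanSpace ℝ (Fin N)
  m_transverse : ∀ α ∈ R, ⟪α, m⟫ ≠ 0

/-- The positive subsystem `R₊`. -/
def DunklRootSystem.pos {N : ℕ} (S : DunklRootSystem N) : Finset (EuclideanSpace ℝ (Fin N)) :=
  S.R.filter fun α => 0 < ⟪α, S.m⟫

/-- The reflection group `W`, as a subgroup of the group of linear isometries of `ℝ^N`. -/
def DunklRootSystem.W {N : ℕ} (S : DunklRootSystem N) :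
    Subgroup (EuclideanSpace ℝ (Fin N) ≃ₗᵢ[ℝ] EuclideanSpace ℝ (Fin N)) :=
  Subgroup.closure { g | ∃ α ∈ S.R, ⇑g = sigmaRefl α }

namespace St5Aux

variable {N : ℕ} (S : DunklRootSystem N)

local notation "E" => EuclideanSpace ℝ (Fin N)

lemma pos_subset {α : E} (h : α ∈ S.pos) : α ∈ S.R := (Finset.mem_filter.mp h).1

lemma pos_inner_m {α : E} (h : α ∈ S.pos) : 0 < ⟪α, S.m⟫ := (Finset.mem_filter.mp h).2

lemma neg_mem_R {α : E} (hα : α ∈ S.R) : -α ∈ S.R := by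
  have := S.invariant α hα α hα
  rwa [sigmaRefl_self_eq_neg α (S.nonzero α hα)] at this

lemma exists_pos_same_refl {α : E} (hα : α ∈ S.R) :
    ∃ α' ∈ S.pos, sigmaRefl α' = sigmaRefl α := by
  rcases (S.m_transverse α hα).lt_or_gt with h | h
  · refine ⟨-α, Finset.mem_filter.mpr ⟨neg_mem_R S hα, ?_⟩, sigmaRefl_neg α⟩
    rw [inner_neg_left]; linarith
  · exact ⟨α, Finset.mem_filter.mpr ⟨hα, h⟩, rfl⟩

lemma reflIso_mem_W {α : E} (hα : α ∈ S.R) :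
    reflIso α (S.nonzero α hα) ∈ S.W :=
  Subgroup.subset_closure ⟨α, hα, rfl⟩

lemma W_maps_R : ∀ w ∈ S.W, ∀ α ∈ S.R, w α ∈ S.R := by
  intro w hw
  induction hw using Subgroup.closure_induction with
  | mem g hg =>
    obtain ⟨β, hβ, hgc⟩ := hg
    intro α hα
    have : g α = sigmaRefl β α := congrFun hgc α
    rw [this]
    exact S.invariant β hβ α hα
  | one => intro α hα; simpa using hα
  | mul u v hu hv ihu ihv =>
    intro α hα
    rw [LinearIsometryEquiv.coe_mul, Function.comp_apply]
    exact ihu _ (ihv _ hα)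
  | inv u hu ihu =>
    classical
    intro α hα
    have himg : S.R.image (fun ξ => u ξ) = S.R := by
      apply Finset.eq_of_subset_of_card_le
      · intro y hy
        obtain ⟨ξ, hξ, rfl⟩ := Finset.mem_image.mp hy
        exact ihu _ hξ
      · rw [Finset.card_image_of_injective _ u.injective]
    obtain ⟨ξ, hξ, hξα⟩ := Finset.mem_image.mp (himg ▸ hα)
    have : u⁻¹ α = ξ := by
      rw [← hξα, LinearIsometryEquiv.coe_inv]
      exact u.symm_apply_apply ξ
    rw [this]; exact hξ

lemma W_fixes : ∀ w ∈ S.W, ∀ y : E, (∀ α ∈ S.R, ⟪α, y⟫ = 0) → w y = y := by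
  intro w hw
  induction hw using Subgroup.closure_induction with
  | mem g hg =>
    obtain ⟨β, hβ, hgc⟩ := hg
    intro y hy
    rw [congrFun hgc y]
    exact sigmaRefl_of_inner_zero (hy β hβ)
  | one => intro y hy; rfl
  | mul u v hu hv ihu ihv =>
    intro y hy
    rw [LinearIsometryEquiv.coe_mul, Function.comp_apply, ihv y hy, ihu y hy]
  | inv u hu ihu =>
    intro y hy
    have h1 : u⁻¹ (u y) = y := by
      rw [LinearIsometryEquiv.coe_inv]; exact u.symm_apply_apply y
    rwa [ihu y hy] at h1

lemma W_ext {w : E ≃ₗᵢ[ℝ] E} (hw : w ∈ S.W) (hfix : ∀ α ∈ S.R, w α = α) (x : E) :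
    w x = x := by
  obtain ⟨y, hy, z, hz, rfl⟩ :=
    Submodule.exists_add_mem_mem_orthogonal (K := Submodule.span ℝ (S.R : Set E)) x
  have hwy : w y = y := by
    induction hy using Submodule.span_induction with
    | mem a ha => exact hfix a ha
    | zero => exact map_zero w
    | add a b _ _ iha ihb => rw [map_add, iha, ihb]
    | smul c a _ iha => rw [_root_.map_smul, iha]
  have hwz : w z = z :=
    W_fixes S w hw z fun α hα =>
      (Submodule.mem_orthogonal _ z).mp hz α (Submodule.subset_span hα)
  rw [map_add, hwy, hwz]

lemma W_finite : (S.W : Set (E ≃ₗᵢ[ℝ] E)).Finite := by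
  rw [← Set.finite_coe_iff]
  let f : ↥(S.W : Set (E ≃ₗᵢ[ℝ] E)) → (↥S.R → ↥S.R) := fun w a =>
    ⟨w.1 a.1, W_maps_R S w.1 w.2 a.1 a.2⟩
  have hf : Function.Injective f := by
    intro u v huv
    apply Subtype.ext
    apply LinearIsometryEquiv.ext
    intro x
    have h1 : ∀ α ∈ S.R, u.1 α = v.1 α := fun α hα =>
      congrArg Subtype.val (congrFun huv ⟨α, hα⟩)
    have ht : (u.1⁻¹ * v.1) ∈ S.W := mul_mem (inv_mem u.2) v.2
    have hfix : ∀ α ∈ S.R, (u.1⁻¹ * v.1) α = α := by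
      intro α hα
      rw [LinearIsometryEquiv.coe_mul, Function.comp_apply, ← h1 α hα,
        LinearIsometryEquiv.coe_inv]
      exact (u.1).symm_apply_apply α
    have hx := W_ext S ht hfix x
    rw [LinearIsometryEquiv.coe_mul, Function.comp_apply, LinearIsometryEquiv.coe_inv] at hx
    have h2 := congrArg u.1 hx
    rw [(u.1).apply_symm_apply] at h2
    exact h2.symm
  exact Finite.of_injective f hf


lemma eval_line (p : MvPolynomial (Fin N) ℝ) (y v : E) (t : ℝ) :
    Polynomial.eval t
        ((MvPolynomial.aeval fun j => Polynomial.C (y j) + Polynomial.C (v j) * Polynomial.X) p)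
      = MvPolynomial.eval (fun j => y j + v j * t) p := by
  rw [MvPolynomial.aeval_def]
  have h := MvPolynomial.eval₂_comp_left (Polynomial.evalRingHom t)
      (algebraMap ℝ (Polynomial ℝ))
      (fun j => Polynomial.C (y j) + Polynomial.C (v j) * Polynomial.X) p
  have hcomp : (Polynomial.evalRingHom t).comp (algebraMap ℝ (Polynomial ℝ)) = RingHom.id ℝ := by
    ext a; simp
  rw [hcomp] at h
  rw [Polynomial.coe_evalRingHom] at h
  rw [h, ← MvPolynomial.eval₂_id]
  congr 1
  funext j
  simp

/-- Step A: pointwise, at regular points, the weighted sum of differences vanishes. -/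
lemma stepA (κ : E → ℝ) (p : MvPolynomial (Fin N) ℝ) (x : E)
    (hx : ∀ α ∈ S.pos, ⟪α, x⟫ ≠ 0)
    (H : ∀ i : Fin N, ∑ α ∈ S.pos, κ α * α i *
        ((MvPolynomial.eval (fun j => x j) p -
          MvPolynomial.eval (fun j => sigmaRefl α x j) p) / ⟪α, x⟫) = 0) :
    ∑ α ∈ S.pos, κ α * (MvPolynomial.eval (fun j => x j) p -
        MvPolynomial.eval (fun j => sigmaRefl α x j) p) = 0 := by
  set Δ : E → ℝ := fun α => MvPolynomial.eval (fun j => x j) p -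
      MvPolynomial.eval (fun j => sigmaRefl α x j) p with hΔ
  have key : ∀ α ∈ S.pos,
      ∑ i, x i * (κ α * α i * (Δ α / ⟪α, x⟫)) = κ α * Δ α := by
    intro α hα
    have h1 : ∑ i, x i * (κ α * α i * (Δ α / ⟪α, x⟫))
        = (κ α * (Δ α / ⟪α, x⟫)) * ∑ i, α i * x i := by
      rw [Finset.mul_sum]
      exact Finset.sum_congr rfl fun i _ => by ring
    rw [h1, ← inner_sum, mul_assoc, div_mul_cancel₀ _ (hx α hα)]
  calc ∑ α ∈ S.pos, κ α * Δ α
      = ∑ α ∈ S.pos, ∑ i, x i * (κ α * α i * (Δ α / ⟪α, x⟫)) :=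
        Finset.sum_congr rfl fun α hα => (key α hα).symm
    _ = ∑ i, ∑ α ∈ S.pos, x i * (κ α * α i * (Δ α / ⟪α, x⟫)) := Finset.sum_comm
    _ = ∑ i : Fin N, x i * ∑ α ∈ S.pos, κ α * α i * (Δ α / ⟪α, x⟫) := by
        exact Finset.sum_congr rfl fun i _ => (Finset.mul_sum _ _ _).symm
    _ = 0 := by
        refine Finset.sum_eq_zero fun i _ => ?_
        rw [H i, mul_zero]

/-- Step B: the identity of Step A extends to every point. -/
lemma stepB (κ : E → ℝ) (p : MvPolynomial (Fin N) ℝ)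
    (H : ∀ x : E, (∀ α ∈ S.pos, ⟪α, x⟫ ≠ 0) →
      ∑ α ∈ S.pos, κ α * (MvPolynomial.eval (fun j => x j) p -
        MvPolynomial.eval (fun j => sigmaRefl α x j) p) = 0)
    (x : E) :
    ∑ α ∈ S.pos, κ α * (MvPolynomial.eval (fun j => x j) p -
        MvPolynomial.eval (fun j => sigmaRefl α x j) p) = 0 := by
  classical
  set line : E → E → Polynomial ℝ := fun y v =>
    (MvPolynomial.aeval fun j => Polynomial.C (y j) + Polynomial.C (v j) * Polynomial.X) p
    with hline
  set q : Polynomial ℝ := ∑ α ∈ S.pos, Polynomial.C (κ α) *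
      (line x S.m - line (sigmaRefl α x) (sigmaRefl α S.m)) with hq
  have hcoord : ∀ (α : E) (t : ℝ) (j : Fin N),
      sigmaRefl α x j + sigmaRefl α S.m j * t = sigmaRefl α (x + t • S.m) j := by
    intro α t j
    rw [sigmaRefl_add_smul]
    simp [mul_comm]
  have hqeval : ∀ t : ℝ, q.eval t = ∑ α ∈ S.pos, κ α *
      (MvPolynomial.eval (fun j => (x + t • S.m) j) p -
        MvPolynomial.eval (fun j => sigmaRefl α (x + t • S.m) j) p) := by
    intro t
    rw [hq, Polynomial.eval_finset_sum]
    refine Finset.sum_congr rfl fun α hα => ?_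
    rw [Polynomial.eval_mul, Polynomial.eval_C, Polynomial.eval_sub, hline]
    simp only []
    rw [eval_line, eval_line]
    have e1 : (fun j => x j + S.m j * t) = fun j => (x + t • S.m) j := by
      funext j; simp [mul_comm]
    have e2 : (fun j => sigmaRefl α x j + sigmaRefl α S.m j * t)
        = fun j => sigmaRefl α (x + t • S.m) j := by
      funext j; exact hcoord α t j
    rw [e1, e2]
  have hroots : {t : ℝ | q.IsRoot t}.Infinite := by
    have hbad : {t : ℝ | ¬ ∀ α ∈ S.pos, ⟪α, x + t • S.m⟫ ≠ 0}.Finite := by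
      refine Set.Finite.subset
        (Finset.finite_toSet (S.pos.image fun α => -⟪α, x⟫ / ⟪α, S.m⟫)) ?_
      intro t ht
      push_neg at ht
      obtain ⟨α, hα, h0⟩ := ht
      have hm : (0:ℝ) < ⟪α, S.m⟫ := pos_inner_m S hα
      have h1 : ⟪α, x⟫ + t * ⟪α, S.m⟫ = 0 := by
        rw [← h0, inner_add_right, real_inner_smul_right]
      simp only [Finset.coe_image, Set.mem_image, Finset.mem_coe]
      refine ⟨α, hα, ?_⟩
      rw [div_eq_iff (ne_of_gt hm)]
      linarith
    have hcompl := hbad.infinite_compl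
    refine hcompl.mono ?_
    intro t ht
    simp only [Set.mem_compl_iff, Set.mem_setOf_eq, not_not] at ht
    show q.IsRoot t
    rw [Polynomial.IsRoot, hqeval t]
    exact H _ ht
  have hq0 : q = 0 := Polynomial.eq_zero_of_infinite_isRoot q hroots
  have h0 := hqeval 0
  rw [hq0] at h0
  simp only [Polynomial.eval_zero] at h0
  have hx0 : x + (0:ℝ) • S.m = x := by rw [zero_smul, add_zero]
  rw [hx0] at h0
  exact h0.symm


lemma inv_apply_eq {g : E ≃ₗᵢ[ℝ] E} (hinv : ∀ y, g (g y) = y) (y : E) : g⁻¹ y = g y := by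
  have h1 : g⁻¹ (g (g y)) = g⁻¹ y := by rw [hinv y]
  rw [LinearIsometryEquiv.coe_inv, g.symm_apply_apply] at h1
  exact h1.symm

/-- The maximum principle on orbits: the everywhere identity of Step B forces invariance. -/
lemma key_invariance (κ : E → ℝ) (hκpos : ∀ α ∈ S.R, 0 < κ α)
    (p : MvPolynomial (Fin N) ℝ)
    (Hstar : ∀ x : E, ∑ α ∈ S.pos, κ α * (MvPolynomial.eval (fun j => x j) p -
        MvPolynomial.eval (fun j => sigmaRefl α x j) p) = 0) :
    ∀ ρ ∈ S.W, ∀ x : E, MvPolynomial.eval (fun i => ρ x i) p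
      = MvPolynomial.eval (fun i => x i) p := by
  intro ρ hρ x₀
  set P : E → ℝ := fun z => MvPolynomial.eval (fun j => z j) p with hP
  show P (ρ x₀) = P x₀
  set O : Set E := (fun w : E ≃ₗᵢ[ℝ] E => w x₀) '' (S.W : Set _) with hO
  have hOfin : O.Finite := (W_finite S).image _
  have hx₀O : x₀ ∈ O := ⟨1, S.W.one_mem, rfl⟩
  obtain ⟨ys, hysO, hmax⟩ : ∃ y ∈ O, ∀ z ∈ O, P z ≤ P y := by
    obtain ⟨y, hy, h⟩ := Set.Finite.exists_maximalFor P O hOfin ⟨x₀, hx₀O⟩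
    exact ⟨y, hy, fun z hz =>
      le_of_not_gt fun hlt => absurd (h hz hlt.le) (not_le.mpr hlt)⟩
  set M : Set E := {y | y ∈ O ∧ P y = P ys} with hM
  have hstabO : ∀ w ∈ S.W, ∀ y ∈ O, w y ∈ O := by
    rintro w hw y ⟨u, hu, rfl⟩
    exact ⟨w * u, mul_mem hw hu, by simp [LinearIsometryEquiv.coe_mul]⟩
  have hMrefl : ∀ α ∈ S.R, ∀ y ∈ M, sigmaRefl α y ∈ M := by
    intro α hαR y hyM
    obtain ⟨hyO, hyP⟩ := hyM
    obtain ⟨α', hα'pos, hσ⟩ := exists_pos_same_refl S hαR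
    rw [← hσ]
    have hσO : ∀ ξ, ξ ∈ S.pos → sigmaRefl ξ y ∈ O := by
      intro ξ hξ
      have h := hstabO _ (reflIso_mem_W S (pos_subset S hξ)) y hyO
      rwa [reflIso_coe] at h
    have hnonneg : ∀ ξ ∈ S.pos, 0 ≤ κ ξ * (P y - P (sigmaRefl ξ y)) := by
      intro ξ hξ
      have h1 : P (sigmaRefl ξ y) ≤ P ys := hmax _ (hσO ξ hξ)
      have hκ := hκpos ξ (pos_subset S hξ)
      have h2 : 0 ≤ P y - P (sigmaRefl ξ y) := by rw [hyP]; linarith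
      exact mul_nonneg hκ.le h2
    have hterm := (Finset.sum_eq_zero_iff_of_nonneg hnonneg).mp (Hstar y) α' hα'pos
    have hκ := hκpos α' (pos_subset S hα'pos)
    have hPeq : P (sigmaRefl α' y) = P y := by
      rcases mul_eq_zero.mp hterm with h | h
      · exact absurd h (ne_of_gt hκ)
      · linarith [sub_eq_zero.mp h]
    exact ⟨hσO α' hα'pos, by rw [hPeq, hyP]⟩
  have hMW : ∀ w ∈ S.W, (∀ y ∈ M, w y ∈ M) ∧ (∀ y ∈ M, w⁻¹ y ∈ M) := by
    intro w hw
    induction hw using Subgroup.closure_induction with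
    | mem g hg =>
      obtain ⟨α, hα, hgc⟩ := hg
      have hgM : ∀ y ∈ M, g y ∈ M := by
        intro y hy
        rw [show g y = sigmaRefl α y from congrFun hgc y]
        exact hMrefl α hα y hy
      refine ⟨hgM, fun y hy => ?_⟩
      have hinvol : ∀ z, g (g z) = z := by
        intro z
        rw [congrFun hgc (g z), congrFun hgc z]
        exact sigmaRefl_involutive α (S.nonzero α hα) z
      rw [inv_apply_eq hinvol y]
      exact hgM y hy
    | one =>
      constructor <;> intro y hy <;> simpa
    | mul u v hu hv ihu ihv =>
      refine ⟨fun y hy => ?_, fun y hy => ?_⟩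
      · rw [LinearIsometryEquiv.coe_mul, Function.comp_apply]
        exact ihu.1 _ (ihv.1 y hy)
      · rw [mul_inv_rev, LinearIsometryEquiv.coe_mul, Function.comp_apply]
        exact ihv.2 _ (ihu.2 y hy)
    | inv u hu ihu =>
      refine ⟨ihu.2, fun y hy => ?_⟩
      rw [inv_inv]
      exact ihu.1 y hy
  obtain ⟨w₀, hw₀, hw₀x⟩ := hysO
  have hysM : ys ∈ M := ⟨⟨w₀, hw₀, hw₀x⟩, rfl⟩
  have hx₀M : x₀ ∈ M := by
    have h := (hMW w₀ hw₀).2 ys hysM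
    have : w₀⁻¹ ys = x₀ := by
      rw [← hw₀x, LinearIsometryEquiv.coe_inv]
      exact w₀.symm_apply_apply x₀
    rwa [this] at h
  have hρx : ρ x₀ ∈ M := (hMW ρ hρ).1 x₀ hx₀M
  rw [hρx.2, hx₀M.2]

end St5Aux

/-- The Dunkl operator `T_i` (with renormalized multiplicities `κ` and coupling `β`). -/
def dunklT {N : ℕ} (S : DunklRootSystem N) (κ : EuclideanSpace ℝ (Fin N) → ℝ) (β : ℝ)
    (i : Fin N) (f : EuclideanSpace ℝ (Fin N) → ℝ) (x : EuclideanSpace ℝ (Fin N)) : ℝ :=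
  fderiv ℝ f x (EuclideanSpace.single i 1) +
    (β / 2) * ∑ α ∈ S.pos, α i * κ α * ((f x - f (sigmaRefl α x)) / ⟪α, x⟫)

/-- A polynomial function `p` is `W`-invariant iff the difference part of every
Dunkl operator annihilates it; equivalently (for any `β > 0`) the Dunkl operators `T_i` coincide
with the partial derivatives `∂/∂x_i` on `p`. -/
theorem statement5 {N : ℕ} (hN : 1 ≤ N) (S : DunklRootSystem N)
    (κ : EuclideanSpace ℝ (Fin N) → ℝ)
    (hκpos : ∀ α ∈ S.R, 0 < κ α)
    (hκinv : ∀ α ∈ S.R, ∀ ξ ∈ S.R, κ (sigmaRefl α ξ) = κ ξ)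
    (p : MvPolynomial (Fin N) ℝ) :
    ((∀ ρ ∈ S.W, ∀ x : EuclideanSpace ℝ (Fin N),
        MvPolynomial.eval (fun i => ρ x i) p = MvPolynomial.eval (fun i => x i) p) ↔
      (∀ i : Fin N, ∀ x : EuclideanSpace ℝ (Fin N), (∀ α ∈ S.pos, ⟪α, x⟫ ≠ 0) →
        ∑ α ∈ S.pos, κ α * α i *
            ((MvPolynomial.eval (fun j => x j) p -
              MvPolynomial.eval (fun j => sigmaRefl α x j) p) / ⟪α, x⟫) = 0)) ∧
    (∀ β : ℝ, 0 < β →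
      ((∀ ρ ∈ S.W, ∀ x : EuclideanSpace ℝ (Fin N),
          MvPolynomial.eval (fun i => ρ x i) p = MvPolynomial.eval (fun i => x i) p) ↔
        (∀ i : Fin N, ∀ x : EuclideanSpace ℝ (Fin N), (∀ α ∈ S.pos, ⟪α, x⟫ ≠ 0) →
          dunklT S κ β i (fun z => MvPolynomial.eval (fun j => z j) p) x
            = fderiv ℝ (fun z : EuclideanSpace ℝ (Fin N) =>
                MvPolynomial.eval (fun j => z j) p) x (EuclideanSpace.single i 1)))) := by
  classical
  have forwardDiff : (∀ ρ ∈ S.W, ∀ x : EuclideanSpace ℝ (Fin N),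
        MvPolynomial.eval (fun i => ρ x i) p = MvPolynomial.eval (fun i => x i) p) →
      ∀ α ∈ S.R, ∀ x : EuclideanSpace ℝ (Fin N),
        MvPolynomial.eval (fun j => sigmaRefl α x j) p
          = MvPolynomial.eval (fun j => x j) p := by
    intro hinv α hα x
    have h := hinv (St5Aux.reflIso α (S.nonzero α hα)) (St5Aux.reflIso_mem_W S hα) x
    simp only [St5Aux.reflIso_coe] at h
    exact h
  have main : (∀ ρ ∈ S.W, ∀ x : EuclideanSpace ℝ (Fin N),
        MvPolynomial.eval (fun i => ρ x i) p = MvPolynomial.eval (fun i => x i) p) ↔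
      (∀ i : Fin N, ∀ x : EuclideanSpace ℝ (Fin N), (∀ α ∈ S.pos, ⟪α, x⟫ ≠ 0) →
        ∑ α ∈ S.pos, κ α * α i *
            ((MvPolynomial.eval (fun j => x j) p -
              MvPolynomial.eval (fun j => sigmaRefl α x j) p) / ⟪α, x⟫) = 0) := by
    constructor
    · intro hinv i x hx
      refine Finset.sum_eq_zero fun α hα => ?_
      rw [forwardDiff hinv α (St5Aux.pos_subset S hα) x, sub_self, zero_div, mul_zero]
    · intro H
      exact St5Aux.key_invariance S κ hκpos p
        (St5Aux.stepB S κ p fun x hx => St5Aux.stepA S κ p x hx fun i => H i x hx)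
  refine ⟨main, fun β hβ => ?_⟩
  have hβ2 : β / 2 ≠ 0 := div_ne_zero hβ.ne' two_ne_zero
  have hsum_eq : ∀ (i : Fin N) (x : EuclideanSpace ℝ (Fin N)),
      ∑ α ∈ S.pos, α i * κ α *
          ((MvPolynomial.eval (fun j => x j) p -
            MvPolynomial.eval (fun j => sigmaRefl α x j) p) / ⟪α, x⟫)
        = ∑ α ∈ S.pos, κ α * α i *
          ((MvPolynomial.eval (fun j => x j) p -
            MvPolynomial.eval (fun j => sigmaRefl α x j) p) / ⟪α, x⟫) :=
    fun i x => Finset.sum_congr rfl fun α _ => by ring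
  constructor
  · intro hinv i x hx
    have h0 : ∑ α ∈ S.pos, α i * κ α *
        ((MvPolynomial.eval (fun j => x j) p -
          MvPolynomial.eval (fun j => sigmaRefl α x j) p) / ⟪α, x⟫) = 0 := by
      refine Finset.sum_eq_zero fun α hα => ?_
      rw [forwardDiff hinv α (St5Aux.pos_subset S hα) x, sub_self, zero_div, mul_zero]
    simp only [dunklT]
    rw [h0, mul_zero, add_zero]
  · intro H
    apply main.mpr
    intro i x hx
    have h1 := H i x hx
    simp only [dunklT] at h1
    rw [add_eq_left] at h1
    rcases mul_eq_zero.mp h1 with h | h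
    · exact absurd h hβ2
    · rw [← hsum_eq i x]
      exact h
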